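/- Let A be a commutative ring, d a positive integer, B a commutative A-algebra finite locally free of rank d as an A-module, f : A → A' a homomorphism of commutative rings, and B' = A' ⊗_A B (a commutative A'-algebra which is finite locally free of rank d as an A'-module). The canonical base-change A-algebra homomorphism c : B^{⊗d} → (B')^{⊗d} is S_d-equivariant, hence carries S^d_A(B) into S^d_{A'}(B'), and the norm homomorphisms satisfy φ_{B'/A'}(c(s)) = f(φ_{B/A}(s)) for every s ∈ S^d_A(B). -/

import Mathlib

open scoped TensorProduct
open PiTensorProduct

/-- The canonical `A`-linear map `B^{⊗d} → ⋀^d_A B` sending `b₁ ⊗ ⋯ ⊗ b_d` to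
`b₁ ∧ ⋯ ∧ b_d`. -/
noncomputable def tensorPowerToExteriorPower (A : Type*) [CommRing A] (B : Type*) [CommRing B]
    [Algebra A B] (d : ℕ) : (⨂[A] (_ : Fin d), B) →ₗ[A] ⋀[A]^d B :=
  PiTensorProduct.lift
    (((ExteriorAlgebra.ιMulti A d (M := B)).codRestrict (⋀[A]^d B)
      (fun v => ExteriorAlgebra.ιMulti_range A d (Set.mem_range_self v))).toMultilinearMap)

/-- A multilinear map vanishing on tuples from a spanning set vanishes. -/
lemma aux_multilinear_vanish {R M X : Type} [CommRing R] [AddCommGroup M] [Module R M]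
    [AddCommGroup X] [Module R X] {d : ℕ} (S : Set M) (hS : Submodule.span R S = ⊤)
    (g : MultilinearMap R (fun _ : Fin d => M) X)
    (h : ∀ v : Fin d → M, (∀ i, v i ∈ S) → g v = 0) : ∀ v, g v = 0 := by
  suffices H : ∀ (k : ℕ) (v : Fin d → M), (∀ i : Fin d, (k : ℕ) ≤ i.1 → v i ∈ S) → g v = 0 by
    intro v
    exact H d v (fun i hi => absurd i.2 (by omega))
  intro k
  induction k with
  | zero => exact fun v hv => h v fun i => hv i (Nat.zero_le _)
  | succ k ih =>
    intro v hv
    by_cases hk : k < d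
    · set i0 : Fin d := ⟨k, hk⟩ with hi0
      have hmem : v i0 ∈ Submodule.span R S := hS ▸ Submodule.mem_top
      have key : ∀ x ∈ Submodule.span R S, g (Function.update v i0 x) = 0 := by
        intro x hx
        induction hx using Submodule.span_induction with
        | mem y hy =>
          apply ih
          intro i hi
          rcases eq_or_ne i i0 with rfl | hne
          · simpa using hy
          · rw [Function.update_of_ne hne]
            refine hv i ?_
            have : i.1 ≠ k := fun hik => hne (Fin.ext hik)
            omega
        | zero => simp
        | add x y hx hy ihx ihy => rw [g.map_update_add, ihx, ihy, add_zero]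
        | smul a x hx ihx => rw [g.map_update_smul, ihx, smul_zero]
      have := key (v i0) hmem
      simpa using this
    · refine ih v fun i hi => absurd (lt_of_lt_of_le i.2 (not_lt.mp hk)) (by omega)

lemma aux_rankAtStalk_baseChange (A : Type) [CommRing A] (B : Type) [CommRing B] [Algebra A B]
    [Module.Finite A B] [Module.Projective A B] (d : ℕ)
    (hrank : ∀ p : PrimeSpectrum A, Module.rankAtStalk B p = d)
    (A' : Type) [CommRing A'] [Algebra A A'] (q : PrimeSpectrum A') :
    Module.rankAtStalk (A' ⊗[A] B) q = d := by
  classical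
  let p : PrimeSpectrum A := ⟨q.asIdeal.comap (algebraMap A A'), Ideal.IsPrime.comap _⟩
  set Ap := Localization.AtPrime p.asIdeal with hAp
  set Bp := LocalizedModule p.asIdeal.primeCompl B with hBp
  set Rq := Localization.AtPrime q.asIdeal with hRq
  set Nq := LocalizedModule q.asIdeal.primeCompl (A' ⊗[A] B) with hNq
  -- instances on Bp over Ap
  haveI : Module.Finite Ap Bp :=
    Module.Finite.of_isLocalizedModule p.asIdeal.primeCompl
      (LocalizedModule.mkLinearMap p.asIdeal.primeCompl B)
  haveI : Module.Projective Ap Bp :=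
    Module.projective_of_isLocalizedModule p.asIdeal.primeCompl
      (LocalizedModule.mkLinearMap p.asIdeal.primeCompl B)
  haveI : Module.FinitePresentation Ap Bp := Module.finitePresentation_of_projective _ _
  haveI : Module.Free Ap Bp := Module.free_of_flat_of_isLocalRing
  have hfr : Module.finrank Ap Bp = d := hrank p
  let b0 : Module.Basis (Fin d) Ap Bp := (Module.finBasis Ap Bp).reindex (finCongr hfr)
  -- algebra structures
  letI : Algebra Ap Rq :=
    (Localization.localRingHom p.asIdeal q.asIdeal (algebraMap A A') rfl).toAlgebra
  haveI : IsScalarTower A Ap Rq := IsScalarTower.of_algebraMap_eq (fun x => by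
    show algebraMap A Rq x =
      Localization.localRingHom p.asIdeal q.asIdeal (algebraMap A A') rfl
        (algebraMap A Ap x)
    rw [Localization.localRingHom_to_map, IsScalarTower.algebraMap_apply A A' Rq])
  -- equivalence chain
  let e1 : Rq ⊗[A'] (A' ⊗[A] B) ≃ₗ[Rq] Nq :=
    (IsLocalizedModule.isBaseChange q.asIdeal.primeCompl Rq
      (LocalizedModule.mkLinearMap q.asIdeal.primeCompl (A' ⊗[A] B))).equiv
  let e2 : Rq ⊗[A] B ≃ₗ[Rq] Rq ⊗[A'] (A' ⊗[A] B) :=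
    (TensorProduct.AlgebraTensorModule.cancelBaseChange A A' Rq Rq B).symm
  let e3 : Rq ⊗[Ap] (Ap ⊗[A] B) ≃ₗ[Rq] Rq ⊗[A] B :=
    TensorProduct.AlgebraTensorModule.cancelBaseChange A Ap Rq Rq B
  let e4 : Ap ⊗[A] B ≃ₗ[Ap] Bp :=
    (IsLocalizedModule.isBaseChange p.asIdeal.primeCompl Ap
      (LocalizedModule.mkLinearMap p.asIdeal.primeCompl B)).equiv
  let b1 : Module.Basis (Fin d) Ap (Ap ⊗[A] B) := b0.map e4.symm
  let bT : Module.Basis (Fin d) Rq (Rq ⊗[Ap] (Ap ⊗[A] B)) := Algebra.TensorProduct.basis Rq b1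
  let bN : Module.Basis (Fin d) Rq Nq := bT.map ((e3.trans e2).trans e1)
  have : Module.finrank Rq Nq = d := by
    rw [Module.finrank_eq_card_basis bN, Fintype.card_fin]
  exact this

/-- Over a ring `R`, if `N` is finite projective of constant rank `d > 0`, then a scalar
killing all `d`-fold wedges of elements of `N` is zero. -/
lemma aux_faithful (R : Type) [CommRing R] (N : Type) [AddCommGroup N] [Module R N]
    [Module.Finite R N] [Module.Projective R N] (d : ℕ)
    (hrank : ∀ q : PrimeSpectrum R, Module.rankAtStalk N q = d)
    (r : R) (H : ∀ w : Fin d → N, r • ExteriorAlgebra.ιMulti R d w = 0) : r = 0 := by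
  classical
  by_contra hr0
  -- the annihilator of r is a proper ideal; choose a maximal ideal above it
  have htop : Ideal.torsionOf R R r ≠ ⊤ := by
    intro h
    have : (1 : R) ∈ Ideal.torsionOf R R r := h ▸ Submodule.mem_top
    rw [Ideal.mem_torsionOf_iff, one_smul] at this
    exact hr0 this
  obtain ⟨q, hq, hIq⟩ := Ideal.exists_le_maximal _ htop
  haveI := hq.isPrime
  let Q : PrimeSpectrum R := ⟨q, hq.isPrime⟩
  set Rq := Localization.AtPrime q with hRq
  set Nq := LocalizedModule q.primeCompl N with hNq
  haveI : Module.Finite Rq Nq :=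
    Module.Finite.of_isLocalizedModule q.primeCompl (LocalizedModule.mkLinearMap q.primeCompl N)
  haveI : Module.Projective Rq Nq :=
    Module.projective_of_isLocalizedModule q.primeCompl
      (LocalizedModule.mkLinearMap q.primeCompl N)
  haveI : Module.FinitePresentation Rq Nq := Module.finitePresentation_of_projective _ _
  haveI : Module.Free Rq Nq := Module.free_of_flat_of_isLocalRing
  have hfr : Module.finrank Rq Nq = d := hrank Q
  let bq : Module.Basis (Fin d) Rq Nq := (Module.finBasis Rq Nq).reindex (finCongr hfr)
  -- choose numerators and denominators for the basis vectors
  have hsurj : ∀ x : Nq, ∃ (m : N) (s : q.primeCompl), LocalizedModule.mk m s = x :=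
    fun x => LocalizedModule.induction_on (fun m s => ⟨m, s, rfl⟩) x
  choose n s hns using fun i => hsurj (bq i)
  -- the coordinate map
  let g : N →ₗ[R] (Fin d → Rq) :=
    LinearMap.pi fun j =>
      ((bq.coord j).restrictScalars R).comp (LocalizedModule.mkLinearMap q.primeCompl N)
  -- the determinant alternating map
  let detA : N [⋀^Fin d]→ₗ[R] Rq :=
    { toMultilinearMap :=
        ((Matrix.detRowAlternating (R := Rq) (n := Fin d)).toMultilinearMap.restrictScalars
          R).compLinearMap (fun _ => g)
      map_eq_zero_of_eq' := fun v i k hik hne => by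
        exact Matrix.detRowAlternating.map_eq_zero_of_eq (fun l => g (v l))
          (show g (v i) = g (v k) by rw [hik]) hne }
  have hdetA : ∀ v : Fin d → N, detA v = Matrix.det (Matrix.of fun i => g (v i)) := fun v => rfl
  -- lift to a linear functional on the exterior algebra
  let F : ∀ m : ℕ, N [⋀^Fin m]→ₗ[R] Rq := Function.update (fun _ => 0) d detA
  let lam : ExteriorAlgebra R N →ₗ[R] Rq := ExteriorAlgebra.liftAlternating F
  have hlam : ∀ w : Fin d → N, lam (ExteriorAlgebra.ιMulti R d w) = detA w := by
    intro w
    rw [ExteriorAlgebra.liftAlternating_apply_ιMulti]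
    simp [F]
  -- apply to the hypothesis at the numerators
  have h0 : algebraMap R Rq r * detA n = 0 := by
    have := congrArg lam (H n)
    rw [map_smul, hlam, map_zero, Algebra.smul_def] at this
    exact this
  -- compute the determinant: it is the product of the images of the denominators
  have hmk : ∀ i, (LocalizedModule.mkLinearMap q.primeCompl N) (n i) = (s i : R) • bq i := by
    intro i
    rw [← hns i]
    show LocalizedModule.mk (n i) 1 = (s i : R) • LocalizedModule.mk (n i) (s i)
    rw [LocalizedModule.smul'_mk, ← LocalizedModule.mk_cancel (s i) (n i)]
    rfl
  have hg : ∀ i, g (n i) = fun j => algebraMap R Rq (s i) * (if i = j then 1 else 0) := by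
    intro i
    funext j
    show (bq.coord j) ((LocalizedModule.mkLinearMap q.primeCompl N) (n i)) = _
    rw [hmk i, ← algebraMap_smul Rq ((s i : R)) (bq i), map_smul, Module.Basis.coord_apply,
      Module.Basis.repr_self, smul_eq_mul]
    congr 1
    by_cases h : i = j <;> simp [h, Finsupp.single_apply]
  have hdet : detA n = ∏ i, algebraMap R Rq (s i) := by
    rw [hdetA]
    have : (Matrix.of fun i => g (n i)) = Matrix.diagonal (fun i => algebraMap R Rq (s i)) := by
      ext i j
      rw [Matrix.of_apply, hg i, Matrix.diagonal_apply]
      by_cases h : i = j <;> simp [h]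
    rw [this, Matrix.det_diagonal]
  -- the determinant is a unit
  have hu : IsUnit (detA n) := by
    rw [hdet]
    exact Finset.prod_induction _ IsUnit (fun a b => IsUnit.mul) isUnit_one
      (fun i _ => IsLocalization.map_units Rq (s i))
  have hz : algebraMap R Rq r = 0 := (hu.mul_left_eq_zero).mp h0
  obtain ⟨m, hm⟩ := (IsLocalization.map_eq_zero_iff q.primeCompl Rq r).mp hz
  exact m.2 (hIq (by rw [Ideal.mem_torsionOf_iff, smul_eq_mul]; exact hm))


lemma tensorPowerToExteriorPower_tprod (A : Type*) [CommRing A] (B : Type*) [CommRing B]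
    [Algebra A B] (d : ℕ) (b : Fin d → B) :
    (tensorPowerToExteriorPower A B d (PiTensorProduct.tprod A b) : ExteriorAlgebra A B) =
      ExteriorAlgebra.ιMulti A d b := by
  simp [tensorPowerToExteriorPower, PiTensorProduct.lift.tprod]

set_option maxHeartbeats 2000000 in
set_option synthInstance.maxHeartbeats 1000000 in
/-- Let `A` be a commutative ring, `d` a positive integer, `B` a commutative
`A`-algebra finite locally free of rank `d`, `f : A → A'` a ring homomorphism and
`B' = A' ⊗_A B`. The canonical base-change `A`-algebra homomorphism `c : B^{⊗d} → B'^{⊗d}` is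
`S_d`-equivariant, hence carries `S^d_A(B)` into `S^d_{A'}(B')`, and the norm homomorphisms
(characterized by `π(s·x) = φ(s)·π(x)`) satisfy `φ_{B'/A'}(c(s)) = f(φ_{B/A}(s))` for every
`s ∈ S^d_A(B)`. -/
theorem norm_hom_base_change
    (A : Type) [CommRing A] (d : ℕ) (hd : 0 < d)
    (B : Type) [CommRing B] [Algebra A B] [Module.Finite A B] [Module.Projective A B]
    (hrank : ∀ p : PrimeSpectrum A, Module.rankAtStalk B p = d)
    (A' : Type) [CommRing A'] [Algebra A A']
    -- the canonical base change homomorphism `c`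
    (c : (⨂[A] (_ : Fin d), B) →+* (⨂[A'] (_ : Fin d), (A' ⊗[A] B)))
    (hc_tprod : ∀ b : Fin d → B,
      c (PiTensorProduct.tprod A b) =
        PiTensorProduct.tprod A' (fun i => (1 : A') ⊗ₜ[A] b i))
    (hc_alg : ∀ a : A, c (algebraMap A (⨂[A] (_ : Fin d), B) a) =
      algebraMap A' (⨂[A'] (_ : Fin d), (A' ⊗[A] B)) (algebraMap A A' a)) :
    -- (i) `c` is `S_d`-equivariant
    (∀ (σ : Equiv.Perm (Fin d)) (x : ⨂[A] (_ : Fin d), B),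
      c (PiTensorProduct.reindex A (fun _ : Fin d => B) σ x) =
        PiTensorProduct.reindex A' (fun _ : Fin d => (A' ⊗[A] B)) σ (c x)) ∧
    -- (ii) hence `c` carries invariants to invariants
    (∀ s : ⨂[A] (_ : Fin d), B,
      (∀ σ : Equiv.Perm (Fin d), PiTensorProduct.reindex A (fun _ : Fin d => B) σ s = s) →
      (∀ σ : Equiv.Perm (Fin d),
        PiTensorProduct.reindex A' (fun _ : Fin d => (A' ⊗[A] B)) σ (c s) = c s)) ∧
    -- (iii) compatibility of the norm homomorphisms with base change
    (∀ (φ : (⨂[A] (_ : Fin d), B) → A) (φ' : (⨂[A'] (_ : Fin d), (A' ⊗[A] B)) → A'),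
      (∀ s : ⨂[A] (_ : Fin d), B,
        (∀ σ : Equiv.Perm (Fin d), PiTensorProduct.reindex A (fun _ : Fin d => B) σ s = s) →
        ∀ x, tensorPowerToExteriorPower A B d (s * x) =
          φ s • tensorPowerToExteriorPower A B d x) →
      (∀ s' : ⨂[A'] (_ : Fin d), (A' ⊗[A] B),
        (∀ σ : Equiv.Perm (Fin d),
          PiTensorProduct.reindex A' (fun _ : Fin d => (A' ⊗[A] B)) σ s' = s') →
        ∀ x', tensorPowerToExteriorPower A' (A' ⊗[A] B) d (s' * x') =
          φ' s' • tensorPowerToExteriorPower A' (A' ⊗[A] B) d x') →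
      ∀ s : ⨂[A] (_ : Fin d), B,
        (∀ σ : Equiv.Perm (Fin d), PiTensorProduct.reindex A (fun _ : Fin d => B) σ s = s) →
        φ' (c s) = algebraMap A A' (φ s)) := by
  classical
  have hc_smul : ∀ (a : A) (y : ⨂[A] (_ : Fin d), B),
      c (a • y) = algebraMap A A' a • c y := by
    intro a y
    rw [Algebra.smul_def, c.map_mul, hc_alg, ← Algebra.smul_def]
  have part1 : ∀ (σ : Equiv.Perm (Fin d)) (x : ⨂[A] (_ : Fin d), B),
      c (PiTensorProduct.reindex A (fun _ : Fin d => B) σ x) =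
        PiTensorProduct.reindex A' (fun _ : Fin d => (A' ⊗[A] B)) σ (c x) := by
    intro σ x
    induction x using PiTensorProduct.induction_on with
    | smul_tprod a b =>
      rw [map_smul, hc_smul, hc_smul, map_smul, hc_tprod, PiTensorProduct.reindex_tprod]
      try rw [hc_tprod]
      try rw [PiTensorProduct.reindex_tprod]
      try rfl
    | add x y hx hy =>
      rw [map_add, c.map_add, hx, hy, c.map_add, map_add]
  have part2 : ∀ s : ⨂[A] (_ : Fin d), B,
      (∀ σ : Equiv.Perm (Fin d), PiTensorProduct.reindex A (fun _ : Fin d => B) σ s = s) →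
      (∀ σ : Equiv.Perm (Fin d),
        PiTensorProduct.reindex A' (fun _ : Fin d => (A' ⊗[A] B)) σ (c s) = c s) := by
    intro s hs σ
    rw [← part1, hs]
  refine ⟨part1, part2, ?_⟩
  intro φ φ' hφ hφ' s hs
  let j : B →ₗ[A] A' ⊗[A] B := (TensorProduct.mk A A' B) 1
  let Faux : ∀ n : ℕ, B [⋀^Fin n]→ₗ[A] ExteriorAlgebra A' (A' ⊗[A] B) := fun n =>
    { toMultilinearMap := ((ExteriorAlgebra.ιMulti A' n).toMultilinearMap.restrictScalars
        A).compLinearMap (fun _ => j)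
      map_eq_zero_of_eq' := fun v i k hik hne =>
        (ExteriorAlgebra.ιMulti A' n).map_eq_zero_of_eq (fun l => j (v l))
          (show j (v i) = j (v k) by rw [hik]) hne }
  let E : ExteriorAlgebra A B →ₗ[A] ExteriorAlgebra A' (A' ⊗[A] B) :=
    ExteriorAlgebra.liftAlternating Faux
  have hE : ∀ (n : ℕ) (v : Fin n → B),
      E (ExteriorAlgebra.ιMulti A n v) = ExteriorAlgebra.ιMulti A' n (fun i => j (v i)) :=
    fun n v => by rw [ExteriorAlgebra.liftAlternating_apply_ιMulti]; rfl
  have key : ∀ y : ⨂[A] (_ : Fin d), B,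
      (tensorPowerToExteriorPower A' (A' ⊗[A] B) d (c y) : ExteriorAlgebra A' (A' ⊗[A] B)) =
        E (tensorPowerToExteriorPower A B d y) := by
    intro y
    induction y using PiTensorProduct.induction_on with
    | smul_tprod a b =>
      have l1 : c (a • PiTensorProduct.tprod A b) =
          algebraMap A A' a • PiTensorProduct.tprod A' (fun i => (1 : A') ⊗ₜ[A] b i) := by
        rw [hc_smul, hc_tprod]
      rw [l1, map_smul, Submodule.coe_smul, tensorPowerToExteriorPower_tprod,
        map_smul, Submodule.coe_smul, map_smul, tensorPowerToExteriorPower_tprod,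
        hE, algebraMap_smul]
      rfl
    | add x y hx hy =>
      rw [c.map_add, map_add, Submodule.coe_add, hx, hy, map_add, Submodule.coe_add, map_add]
  set δ := φ' (c s) with hδ
  set γ := algebraMap A A' (φ s) with hγ
  have hkill : ∀ x : ⨂[A] (_ : Fin d), B,
      (δ - γ) • (tensorPowerToExteriorPower A' (A' ⊗[A] B) d (c x) :
        ExteriorAlgebra A' (A' ⊗[A] B)) = 0 := by
    intro x
    have h1 := congrArg Subtype.val (hφ' (c s) (part2 s hs) (c x))
    rw [Submodule.coe_smul] at h1
    have h3 := congrArg Subtype.val (hφ s hs x)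
    rw [Submodule.coe_smul] at h3
    have h2 : (tensorPowerToExteriorPower A' (A' ⊗[A] B) d (c s * c x) :
        ExteriorAlgebra A' (A' ⊗[A] B)) =
        γ • (tensorPowerToExteriorPower A' (A' ⊗[A] B) d (c x) :
          ExteriorAlgebra A' (A' ⊗[A] B)) := by
      rw [← c.map_mul, key, key, h3, map_smul, hγ, algebraMap_smul]
    rw [sub_smul, ← h1, h2, sub_self]
  have hall : ∀ w : Fin d → (A' ⊗[A] B),
      (δ - γ) • ExteriorAlgebra.ιMulti A' d w = 0 := by
    have hspan : Submodule.span A' (Set.range fun b : B => (1 : A') ⊗ₜ[A] b) = ⊤ := by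
      rw [eq_top_iff]
      rintro x -
      induction x using TensorProduct.induction_on with
      | zero => exact Submodule.zero_mem _
      | tmul a' b =>
        have h : a' ⊗ₜ[A] b = a' • ((1 : A') ⊗ₜ[A] b) := by
          rw [TensorProduct.smul_tmul', smul_eq_mul, mul_one]
        rw [h]
        exact Submodule.smul_mem _ _ (Submodule.subset_span ⟨b, rfl⟩)
      | add x y hx hy => exact Submodule.add_mem _ hx hy
    have := aux_multilinear_vanish _ hspan
      ((δ - γ) • (ExteriorAlgebra.ιMulti A' d (M := A' ⊗[A] B)).toMultilinearMap) ?_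
    · intro w
      exact this w
    intro v hv
    choose b hb using hv
    have hv2 : v = fun i => (1 : A') ⊗ₜ[A] b i := funext fun i => (hb i).symm
    show (δ - γ) • ExteriorAlgebra.ιMulti A' d v = 0
    rw [hv2]
    have h4 := hkill (PiTensorProduct.tprod A b)
    rw [hc_tprod, tensorPowerToExteriorPower_tprod] at h4
    exact h4
  have hzero : δ - γ = 0 :=
    aux_faithful A' (A' ⊗[A] B) d
      (fun q => aux_rankAtStalk_baseChange A B d hrank A' q) (δ - γ) hall
  exact sub_eq_zero.mp hzero
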